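/- Let M be an n×n real Metzler matrix (all off-diagonal entries nonnegative) and let x : [0, ∞) → ℝⁿ be a differentiable function satisfying, for every t ≥ 0 and every coordinate i, the entrywise differential inequality (d/dt) xᵢ(t) ≤ (M x(t))ᵢ. Then for every t ≥ 0 one has the entrywise inequality x(t) ≤ exp(tM) x(0). -/

import Mathlib

open Matrix NormedSpace Set Filter

section MetzlerAux

variable {n : ℕ}

private lemma pow_entries_nonneg {A : Matrix (Fin n) (Fin n) ℝ}
    (hA : ∀ i j, 0 ≤ A i j) : ∀ (k : ℕ) (i j : Fin n), 0 ≤ (A ^ k) i j := by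
  intro k
  induction k with
  | zero =>
    intro i j
    rw [pow_zero, Matrix.one_apply]
    split <;> norm_num
  | succ k ih =>
    intro i j
    rw [pow_succ, Matrix.mul_apply]
    exact Finset.sum_nonneg fun l _ => mul_nonneg (ih i l) (hA l j)

private lemma exp_entries_nonneg {A : Matrix (Fin n) (Fin n) ℝ}
    (hA : ∀ i j, 0 ≤ A i j) (i j : Fin n) : 0 ≤ exp A i j := by
  letI : SeminormedRing (Matrix (Fin n) (Fin n) ℝ) := Matrix.linftyOpSemiNormedRing
  letI : NormedRing (Matrix (Fin n) (Fin n) ℝ) := Matrix.linftyOpNormedRing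
  letI : NormedAlgebra ℝ (Matrix (Fin n) (Fin n) ℝ) := Matrix.linftyOpNormedAlgebra
  have h := NormedSpace.exp_series_hasSum_exp' (𝕂 := ℝ) A
  have h2 := (((continuous_apply j).comp (continuous_apply i)).continuousAt.tendsto.comp h)
  refine ge_of_tendsto h2 (Filter.Eventually.of_forall fun s => ?_)
  show (0:ℝ) ≤ (∑ k ∈ s, ((k.factorial : ℝ))⁻¹ • A ^ k) i j
  simp only [Matrix.sum_apply, Matrix.smul_apply, smul_eq_mul]
  refine Finset.sum_nonneg fun k _ => mul_nonneg (by positivity) (pow_entries_nonneg hA k i j)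

private lemma exp_smul_metzler_nonneg {M : Matrix (Fin n) (Fin n) ℝ}
    (hM : ∀ i j, i ≠ j → 0 ≤ M i j) {s : ℝ} (hs : 0 ≤ s) (i j : Fin n) :
    0 ≤ exp (s • M) i j := by
  letI : SeminormedRing (Matrix (Fin n) (Fin n) ℝ) := Matrix.linftyOpSemiNormedRing
  letI : NormedRing (Matrix (Fin n) (Fin n) ℝ) := Matrix.linftyOpNormedRing
  letI : NormedAlgebra ℝ (Matrix (Fin n) (Fin n) ℝ) := Matrix.linftyOpNormedAlgebra
  set c : ℝ := ∑ k, |M k k| with hc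
  have hc0 : ∀ k : Fin n, 0 ≤ M k k + c := by
    intro k
    have h1 : |M k k| ≤ c :=
      Finset.single_le_sum (f := fun k => |M k k|) (fun _ _ => abs_nonneg _) (Finset.mem_univ k)
    have h2 := neg_abs_le (M k k)
    linarith
  have hN : ∀ a b, 0 ≤ (M + c • (1 : Matrix (Fin n) (Fin n) ℝ)) a b := by
    intro a b
    by_cases hab : a = b
    · subst hab
      simpa [Matrix.add_apply, Matrix.smul_apply, Matrix.one_apply] using hc0 a
    · simpa [Matrix.add_apply, Matrix.smul_apply, Matrix.one_apply, hab] using hM a b hab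
  have key : s • M = s • (M + c • (1 : Matrix (Fin n) (Fin n) ℝ))
      + (-(s * c)) • (1 : Matrix (Fin n) (Fin n) ℝ) := by
    rw [smul_add, smul_smul]
    module
  have hcomm : Commute (s • (M + c • (1 : Matrix (Fin n) (Fin n) ℝ)))
      ((-(s * c)) • (1 : Matrix (Fin n) (Fin n) ℝ)) :=
    ((Commute.one_right _).smul_right _)
  rw [key, Matrix.exp_add_of_commute _ _ hcomm]
  have h1 : exp ((-(s * c)) • (1 : Matrix (Fin n) (Fin n) ℝ))
      = Real.exp (-(s * c)) • (1 : Matrix (Fin n) (Fin n) ℝ) := by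
    rw [← Algebra.algebraMap_eq_smul_one]
    erw [← algebraMap_exp_comm (𝕂 := ℝ)]
    rw [Algebra.algebraMap_eq_smul_one, Real.exp_eq_exp_ℝ]
  rw [h1, mul_smul_comm, mul_one]
  rw [Matrix.smul_apply, smul_eq_mul]
  exact mul_nonneg (Real.exp_nonneg _)
    (exp_entries_nonneg (fun a b => smul_nonneg hs (hN a b)) i j)

end MetzlerAux

/-- Comparison principle: if `M` is Metzler and `x : [0,∞) → ℝⁿ` is differentiable with
`(d/dt) xᵢ(t) ≤ (M x(t))ᵢ` for all `t ≥ 0` and all `i`, then `x(t) ≤ exp(t M) x(0)`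
entrywise for all `t ≥ 0`. -/
theorem metzler_comparison_principle
    (n : ℕ) (M : Matrix (Fin n) (Fin n) ℝ)
    (hMetzler : ∀ i j, i ≠ j → 0 ≤ M i j)
    (x x' : ℝ → Fin n → ℝ)
    (hderiv : ∀ t ∈ Set.Ici (0 : ℝ), HasDerivWithinAt x (x' t) (Set.Ici 0) t)
    (hineq : ∀ t ∈ Set.Ici (0 : ℝ), ∀ i, x' t i ≤ (M *ᵥ x t) i) :
    ∀ t ∈ Set.Ici (0 : ℝ), ∀ i, x t i ≤ ((NormedSpace.exp (t • M)) *ᵥ x 0) i := by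
  intro t ht i
  rw [Set.mem_Ici] at ht
  letI : SeminormedRing (Matrix (Fin n) (Fin n) ℝ) := Matrix.linftyOpSemiNormedRing
  letI : NormedRing (Matrix (Fin n) (Fin n) ℝ) := Matrix.linftyOpNormedRing
  letI : NormedAlgebra ℝ (Matrix (Fin n) (Fin n) ℝ) := Matrix.linftyOpNormedAlgebra
  set E : ℝ → Matrix (Fin n) (Fin n) ℝ := fun s => exp ((t - s) • M) with hE
  -- derivative of `E`
  have hEderiv : ∀ s : ℝ, HasDerivAt E (-(E s * M)) s := by
    intro s
    have h1 : HasDerivAt (fun u : ℝ => exp (u • M)) (exp ((t - s) • M) * M) (t - s) :=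
      hasDerivAt_exp_smul_const M (t - s)
    have h2 : HasDerivAt (fun u : ℝ => t - u) (-1) s := by
      simpa using (hasDerivAt_id s).const_sub t
    have h3 := h1.scomp s h2
    rw [neg_one_smul] at h3
    exact h3
  -- entrywise derivative of `E`
  have hEntry : ∀ (a b : Fin n) (s : ℝ),
      HasDerivAt (fun u => E u a b) ((-(E s * M)) a b) s := by
    intro a b s
    have hL : Continuous fun A : Matrix (Fin n) (Fin n) ℝ => A a b :=
      ((continuous_apply b).comp (continuous_apply a))
    exact (ContinuousLinearMap.hasFDerivAt
      (⟨Matrix.entryLinearMap ℝ ℝ a b, hL⟩ : Matrix (Fin n) (Fin n) ℝ →L[ℝ] ℝ)).comp_hasDerivAt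
        s (hEderiv s)
  -- coordinatewise derivative of `x`
  have hxj : ∀ (j : Fin n), ∀ s ∈ Ici (0:ℝ),
      HasDerivWithinAt (fun u => x u j) (x' s j) (Ici 0) s :=
    fun j s hs => (hasDerivWithinAt_pi.mp (hderiv s hs)) j
  set g : ℝ → ℝ := fun s => ∑ j, E s i j * x s j with hg
  have hgderiv : ∀ s ∈ Ici (0:ℝ), HasDerivWithinAt g
      (∑ j, ((-(E s * M)) i j * x s j + E s i j * x' s j)) (Ici 0) s := by
    intro s hs
    exact HasDerivWithinAt.fun_sum fun j _ =>
      ((hEntry i j s).hasDerivWithinAt.mul (hxj j s hs))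
  -- nonpositivity of the derivative on `[0, t]`
  have hD : ∀ s ∈ Icc (0:ℝ) t,
      (∑ j, ((-(E s * M)) i j * x s j + E s i j * x' s j)) ≤ 0 := by
    intro s hsIcc
    have hEnn : ∀ a b, 0 ≤ E s a b := fun a b =>
      exp_smul_metzler_nonneg hMetzler (sub_nonneg.2 hsIcc.2) a b
    have hx'le := hineq s hsIcc.1
    have h2 : ∑ j, (E s * M) i j * x s j = ∑ j, E s i j * (M *ᵥ x s) j := by
      have h3 : ((E s * M) *ᵥ x s) i = (E s *ᵥ (M *ᵥ x s)) i := by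
        rw [← Matrix.mulVec_mulVec]
      simpa [Matrix.mulVec, dotProduct] using h3
    have h1 : ∑ j, ((-(E s * M)) i j * x s j + E s i j * x' s j)
        = ∑ j, E s i j * (x' s j - (M *ᵥ x s) j) := by
      rw [Finset.sum_add_distrib]
      simp only [Matrix.neg_apply, neg_mul, Finset.sum_neg_distrib]
      rw [h2]
      simp only [mul_sub, Finset.sum_sub_distrib]
      ring
    rw [h1]
    exact Finset.sum_nonpos fun j _ =>
      mul_nonpos_of_nonneg_of_nonpos (hEnn i j) (sub_nonpos.2 (hx'le j))
  -- `g` is antitone on `[0, t]`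
  have hcontg : ContinuousOn g (Icc 0 t) := fun s hs =>
    ((hgderiv s hs.1).continuousWithinAt).mono Icc_subset_Ici_self
  have hanti : AntitoneOn g (Icc 0 t) := by
    apply antitoneOn_of_deriv_nonpos (convex_Icc 0 t) hcontg
    · intro s hs
      rw [interior_Icc] at hs
      exact ((hgderiv s hs.1.le).hasDerivAt
        (Ici_mem_nhds hs.1)).differentiableAt.differentiableWithinAt
    · intro s hs
      rw [interior_Icc] at hs
      rw [((hgderiv s hs.1.le).hasDerivAt (Ici_mem_nhds hs.1)).deriv]
      exact hD s ⟨hs.1.le, hs.2.le⟩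
  have hfin : g t ≤ g 0 := hanti (left_mem_Icc.2 ht) (right_mem_Icc.2 ht) ht
  have hgt : g t = x t i := by
    have hE0 : E t = 1 := by
      rw [hE]
      simp [sub_self, zero_smul, exp_zero]
    simp [hg, hE0, Matrix.one_apply]
  have hg0 : g 0 = (exp (t • M) *ᵥ x 0) i := by
    simp [hg, hE, Matrix.mulVec, dotProduct]
  rw [hgt, hg0] at hfin
  exact hfin
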